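/- Define the Lobachevsky function Λ(x) = −∫_0^x log|2·sin(t)| dt for real x. Then for every real θ, Λ(2θ) = 2·Λ(θ) + 2·Λ(θ + π/2). -/

import Mathlib

open Real MeasureTheory intervalIntegral

/-- The Lobachevsky function in Milnor's normalization,
`Λ(x) = −∫_0^x log|2 sin t| dt`. -/
noncomputable def lobachevsky (x : ℝ) : ℝ := -∫ t in (0:ℝ)..x, Real.log |2 * Real.sin t|

namespace LobAux
open Set

/-- integrability of `log |sin|` on `[0, π/2]`. -/
lemma int_log_abs_sin_0_pi_div_two :
    IntervalIntegrable (fun t => Real.log |Real.sin t|) volume 0 (π / 2) := by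
  rw [intervalIntegrable_iff, uIoc_of_le (by positivity)]
  have hmeas : AEStronglyMeasurable (fun t => Real.log |Real.sin t|)
      (volume.restrict (Ioc 0 (π / 2))) :=
    (Real.measurable_log.comp Real.continuous_sin.measurable.abs).aestronglyMeasurable
  have hmaj : IntegrableOn (fun t : ℝ => Real.log (π / 2) + 2 * t ^ (-(1:ℝ)/2))
      (Ioc 0 (π / 2)) volume := by
    have h1 : IntervalIntegrable (fun t : ℝ => Real.log (π / 2) + 2 * t ^ (-(1:ℝ)/2))
        volume 0 (π / 2) :=
      intervalIntegrable_const.add ((intervalIntegral.intervalIntegrable_rpow'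
        (by norm_num)).const_mul 2)
    rwa [intervalIntegrable_iff, uIoc_of_le (by positivity)] at h1
  refine Integrable.mono' hmaj hmeas ?_
  filter_upwards [ae_restrict_mem measurableSet_Ioc] with t ht
  have ht0 : 0 < t := ht.1
  have htpi : t < π := lt_of_le_of_lt ht.2 (by linarith [Real.pi_pos])
  have hsin : 0 < Real.sin t := Real.sin_pos_of_pos_of_lt_pi ht0 htpi
  have habs : |Real.sin t| = Real.sin t := abs_of_pos hsin
  rw [habs]
  have hle1 : Real.sin t ≤ 1 := Real.sin_le_one t
  have hlog_nonpos : Real.log (Real.sin t) ≤ 0 := Real.log_nonpos hsin.le hle1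
  rw [Real.norm_eq_abs, abs_of_nonpos hlog_nonpos]
  -- Jordan : 2/π * t ≤ sin t
  have hj : 2 / π * t ≤ Real.sin t := Real.mul_le_sin ht0.le ht.2
  have hjt : 0 < 2 / π * t := by positivity
  have h2 : -Real.log (Real.sin t) ≤ -Real.log (2 / π * t) := by
    have := Real.log_le_log hjt hj
    linarith
  have h3 : -Real.log (2 / π * t) = Real.log (π / 2) - Real.log t := by
    rw [Real.log_mul (by positivity) ht0.ne',
      show (2:ℝ) / π = (π / 2)⁻¹ by rw [inv_div], Real.log_inv]
    ring
  -- -log t ≤ 2 * t ^ (-(1/2))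
  have h4 : -Real.log t ≤ 2 * t ^ (-(1:ℝ)/2) := by
    have hrp : (0:ℝ) < t ^ (-(1:ℝ)/2) := Real.rpow_pos_of_pos ht0 _
    have hlogr : Real.log (t ^ (-(1:ℝ)/2)) = (-(1:ℝ)/2) * Real.log t :=
      Real.log_rpow ht0 _
    have hle : Real.log (t ^ (-(1:ℝ)/2)) ≤ t ^ (-(1:ℝ)/2) - 1 :=
      Real.log_le_sub_one_of_pos hrp
    rw [hlogr] at hle
    nlinarith
  linarith

lemma abs_sin_periodic : Function.Periodic (fun t => Real.log |Real.sin t|) π := by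
  intro x
  simp [Real.sin_add_pi]

lemma int_log_abs_sin (a b : ℝ) :
    IntervalIntegrable (fun t => Real.log |Real.sin t|) volume a b := by
  set g : ℝ → ℝ := fun t => Real.log |Real.sin t| with hg
  have h1 : IntervalIntegrable g volume 0 (π / 2) := int_log_abs_sin_0_pi_div_two
  have h2 : IntervalIntegrable g volume (π / 2) π := by
    have h := h1.comp_sub_left π
    have heq : (fun x => g (π - x)) = g := by
      funext x; simp [hg, Real.sin_pi_sub]
    rw [heq, sub_zero, (by ring : π - π / 2 = π / 2)] at h
    exact h.symm
  have h0pi : IntervalIntegrable g volume 0 π := h1.trans h2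
  -- shifted copies
  have hshift : ∀ k : ℤ, IntervalIntegrable g volume (k * π) ((k + 1) * π) := by
    intro k
    have h := h0pi.comp_sub_right (k * π)
    have heq : (fun x => g (x - k * π)) = g := by
      funext x
      have := abs_sin_periodic.sub_int_mul_eq (x := x) k
      simpa [hg] using this
    rw [heq, zero_add, (by ring : π + (k:ℝ) * π = ((k:ℝ) + 1) * π)] at h
    exact_mod_cast h
  have hpos : ∀ n : ℕ, IntervalIntegrable g volume 0 (n * π) := by
    intro n
    induction n with
    | zero => simp
    | succ m ih =>
      refine ih.trans ?_
      have h := hshift m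
      push_cast at h ⊢
      exact h
  have hneg : ∀ n : ℕ, IntervalIntegrable g volume (-(n * π)) 0 := by
    intro n
    induction n with
    | zero => simp
    | succ m ih =>
      refine IntervalIntegrable.trans ?_ ih
      have h := hshift (-(m + 1))
      push_cast at h ⊢
      ring_nf at h ⊢
      exact h
  have hall : ∀ n : ℕ, IntervalIntegrable g volume (-(n * π)) (n * π) := fun n =>
    (hneg n).trans (hpos n)
  obtain ⟨n, hn⟩ := exists_nat_ge ((max |a| |b|) / π)
  have hpi : (0:ℝ) < π := Real.pi_pos
  have hb : max |a| |b| ≤ n * π := by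
    rw [div_le_iff₀ hpi] at hn
    linarith
  have haa := abs_le.mp (le_trans (le_max_left |a| |b|) hb)
  have hbb := abs_le.mp (le_trans (le_max_right |a| |b|) hb)
  refine (hall n).mono_set fun x hx => ?_
  rw [Set.mem_uIcc] at hx
  rw [Set.uIcc_of_le (by linarith [haa.1, haa.2] : -((n:ℝ) * π) ≤ (n:ℝ) * π)]
  constructor <;> rcases hx with ⟨h1, h2⟩ | ⟨h1, h2⟩ <;> linarith

end LobAux

namespace LobAux2
open LobAux

/-- a.e., `sin (2 t) ≠ 0`. -/
lemma ae_sin_two_ne_zero : ∀ᵐ t : ℝ, Real.sin (2 * t) ≠ 0 := by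
  have hz : volume {t : ℝ | Real.sin (2 * t) = 0} = 0 := by
    refine measure_mono_null ?_
      ((Set.countable_range (fun k : ℤ => (k : ℝ) * π / 2)).measure_zero _)
    intro t ht
    obtain ⟨n, hn⟩ := Real.sin_eq_zero_iff.mp ht
    exact ⟨n, by linarith⟩
  rw [ae_iff]
  simpa using hz

lemma ae_ne : ∀ᵐ t : ℝ, Real.sin t ≠ 0 ∧ Real.cos t ≠ 0 := by
  filter_upwards [ae_sin_two_ne_zero] with t ht
  rw [Real.sin_two_mul] at ht
  constructor
  · intro h; apply ht; rw [h]; ring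
  · intro h; apply ht; rw [h]; ring

/-- Integrability of `log |2 sin t|` on any interval. -/
lemma intG (a b : ℝ) :
    IntervalIntegrable (fun t => Real.log |2 * Real.sin t|) volume a b := by
  refine (_root_.intervalIntegrable_const (c := Real.log 2) |>.add (int_log_abs_sin a b)).congr_ae ?_
  refine (ae_restrict_of_ae ?_)
  filter_upwards [ae_ne] with t ht
  rw [abs_mul, abs_two, Real.log_mul two_ne_zero (abs_ne_zero.mpr ht.1)]

/-- Key identity (without the value of the constant). -/
lemma key (θ : ℝ) :
    (∫ t in (0:ℝ)..(2 * θ), Real.log |2 * Real.sin t|) =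
      2 * (∫ t in (0:ℝ)..θ, Real.log |2 * Real.sin t|)
        + 2 * ∫ t in (π/2)..(θ + π/2), Real.log |2 * Real.sin t| := by
  set G : ℝ → ℝ := fun t => Real.log |2 * Real.sin t| with hG
  have step1 : (2:ℝ) • (∫ u in (0:ℝ)..θ, G (2 * u)) = ∫ t in (2*(0:ℝ))..(2*θ), G t :=
    intervalIntegral.smul_integral_comp_mul_left G 2
  have step2 : (∫ u in (0:ℝ)..θ, G (2 * u)) = ∫ u in (0:ℝ)..θ, (G u + G (u + π/2)) := by
    refine intervalIntegral.integral_congr_ae ?_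
    filter_upwards [ae_ne] with u hu _
    have h2s : (2 * Real.sin u) ≠ 0 := by simpa using hu.1
    have h2c : (2 * Real.cos u) ≠ 0 := by simpa using hu.2
    simp only [hG]
    rw [Real.sin_add_pi_div_two, Real.sin_two_mul,
      show 2 * (2 * Real.sin u * Real.cos u) = (2 * Real.sin u) * (2 * Real.cos u) by ring,
      abs_mul, Real.log_mul (abs_ne_zero.mpr h2s) (abs_ne_zero.mpr h2c)]
  have hint2 : IntervalIntegrable (fun u => G (u + π/2)) volume 0 θ := by
    have h := (intG (π/2) (θ + π/2)).comp_add_right (π/2)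
    rw [(by ring : π/2 - π/2 = (0:ℝ)), (by ring : θ + π/2 - π/2 = θ)] at h
    exact h
  have step3 : (∫ u in (0:ℝ)..θ, (G u + G (u + π/2)))
      = (∫ u in (0:ℝ)..θ, G u) + ∫ u in (0:ℝ)..θ, G (u + π/2) :=
    intervalIntegral.integral_add (intG 0 θ) hint2
  have step4 : (∫ u in (0:ℝ)..θ, G (u + π/2)) = ∫ t in (π/2)..(θ + π/2), G t := by
    have := intervalIntegral.integral_comp_add_right (a := (0:ℝ)) (b := θ) G (π/2)
    simpa using this
  have : (∫ t in (0:ℝ)..(2*θ), G t) = 2 * ∫ u in (0:ℝ)..θ, G (2 * u) := by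
    rw [mul_zero] at step1
    rw [← step1, smul_eq_mul]
  rw [this, step2, step3, step4]
  ring

lemma J_eq_zero : (∫ t in (0:ℝ)..(π/2), Real.log |2 * Real.sin t|) = 0 := by
  set G : ℝ → ℝ := fun t => Real.log |2 * Real.sin t| with hG
  have hsym : (∫ t in (π/2)..π, G t) = ∫ t in (0:ℝ)..(π/2), G t := by
    have h := intervalIntegral.integral_comp_sub_left (a := (0:ℝ)) (b := π/2) G π
    rw [sub_zero, (by ring : π - π/2 = π/2)] at h
    rw [← h]
    refine intervalIntegral.integral_congr fun x _ => ?_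
    simp [hG, Real.sin_pi_sub]
  have hkey := key (π/2)
  rw [(by ring : 2 * (π/2) = π), (by ring : π/2 + π/2 = π)] at hkey
  have hadj : (∫ t in (0:ℝ)..(π/2), G t) + (∫ t in (π/2)..π, G t) = ∫ t in (0:ℝ)..π, G t :=
    intervalIntegral.integral_add_adjacent_intervals (intG 0 (π/2)) (intG (π/2) π)
  rw [hsym] at hkey hadj
  linarith

end LobAux2

open LobAux LobAux2 in
/-- The duplication identity for the Lobachevsky function:
`Λ(2θ) = 2Λ(θ) + 2Λ(θ + π/2)`. -/
theorem lobachevsky_two_mul (θ : ℝ) :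
    lobachevsky (2 * θ) = 2 * lobachevsky θ + 2 * lobachevsky (θ + π / 2) := by
  have hkey := key θ
  have hadj : (∫ t in (0:ℝ)..(π/2), Real.log |2 * Real.sin t|)
      + (∫ t in (π/2)..(θ + π/2), Real.log |2 * Real.sin t|)
      = ∫ t in (0:ℝ)..(θ + π/2), Real.log |2 * Real.sin t| :=
    intervalIntegral.integral_add_adjacent_intervals (intG 0 (π/2)) (intG (π/2) (θ + π/2))
  have hJ := J_eq_zero
  unfold lobachevsky
  linarith
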